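/- arXiv:2104.09063 — 5 statements merged into one kernel-verified Lean document; each statement's English description precedes it below -/
import Mathlib

section
/- For any word w over a finite alphabet Σ, ι(w) ≤ ζ(w) ≤ ι(w) + 1, where ζ(w) is the maximal universality index over all conjugates of w. -/
open List

variable {α : Type*}

/-- `w` is `k`-universal: every word of length `k` over the alphabet `α`
is a scattered factor (subsequence) of `w`. -/
def IsUniversal [Fintype α] (k : ℕ) (w : List α) : Prop :=
  ∀ u : List α, u.length = k → u.Sublist w

/-- The universality index `ι(w)`: the largest `k` such that `w` is `k`-universal. -/
noncomputable def univIndex [Fintype α] (w : List α) : ℕ :=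
  sSup {k | IsUniversal k w}

/-- The circular universality index `ζ(w)`: the largest `k` such that some
conjugate of `w` is `k`-universal. -/
noncomputable def circIndex [Fintype α] (w : List α) : ℕ :=
  sSup {k | ∃ u v : List α, w = u ++ v ∧ IsUniversal k (v ++ u)}

/-- `wpow w s = w^s`, the `s`-fold concatenation of `w`. -/
def wpow (w : List α) (s : ℕ) : List α := (List.replicate s w).flatten

/-- Auxiliary (fuelled) computation of the remainder of the arch factorisation:
greedily remove the shortest prefix containing every letter of the alphabet. -/
def remAux [Fintype α] [DecidableEq α] : ℕ → List α → List α
  | 0, w => w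
  | (n+1), w =>
    match (List.range' 1 w.length).find?
        (fun m => decide ((w.take m).toFinset = Finset.univ)) with
    | none => w
    | some m => remAux n (w.drop m)

/-- `rem w = r(w)`, the remainder of the arch factorisation of `w`. -/
def rem [Fintype α] [DecidableEq α] (w : List α) : List α := remAux w.length w

/-- Auxiliary (fuelled) computation of the list of arches of `w`. -/
def archesAux [Fintype α] [DecidableEq α] : ℕ → List α → List (List α)
  | 0, _ => []
  | (n+1), w =>
    match (List.range' 1 w.length).find?
        (fun m => decide ((w.take m).toFinset = Finset.univ)) with
    | none => []
    | some m => (w.take m) :: archesAux n (w.drop m)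

/-- `arches w`: the list `[arch₁(w), …, arch_{ι(w)}(w)]` of arches of `w`. -/
def arches [Fintype α] [DecidableEq α] (w : List α) : List (List α) :=
  archesAux w.length w

lemma isUniversal_zero [Fintype α] (w : List α) : IsUniversal 0 w := by
  intro u hu
  rw [List.length_eq_zero_iff] at hu
  subst hu
  exact nil_sublist w

lemma isUniversal_of_isEmpty [Fintype α] (hα : ¬ Nonempty α) (k : ℕ) (w : List α) :
    IsUniversal k w := by
  intro u hu
  cases u with
  | nil => exact nil_sublist w
  | cons a t => exact absurd ⟨a⟩ hα

lemma isUniversal_mono [Fintype α] {k j : ℕ} {w : List α} (h : IsUniversal k w)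
    (hj : j ≤ k) : IsUniversal j w := by
  by_cases hα : Nonempty α
  · obtain ⟨a⟩ := hα
    intro u hu
    have h2 := h (u ++ List.replicate (k - j) a) (by simp [hu]; omega)
    exact (sublist_append_left u _).trans h2
  · exact isUniversal_of_isEmpty hα j w

lemma isUniversal_le_length [Fintype α] [Nonempty α] {k : ℕ} {w : List α}
    (h : IsUniversal k w) : k ≤ w.length := by
  obtain ⟨a⟩ := ‹Nonempty α›
  have := (h (List.replicate k a) (by simp)).length_le
  simpa using this

lemma isUniversal_append [Fintype α] {p q : ℕ} {u v : List α}
    (hu : IsUniversal p u) (hv : IsUniversal q v) : IsUniversal (p + q) (u ++ v) := by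
  intro x hx
  have hxeq : x = x.take p ++ x.drop p := (take_append_drop p x).symm
  rw [hxeq]
  exact (hu _ (by simp [hx])).append (hv _ (by simp [hx]))

lemma cons_sublist_right_of_not_mem {c : α} {x s t : List α}
    (h : (c :: x) <+ s ++ t) (hc : c ∉ s) : (c :: x) <+ t := by
  induction s with
  | nil => simpa using h
  | cons d s ih =>
    simp only [mem_cons, not_or] at hc
    rw [cons_append] at h
    rcases sublist_cons_iff.mp h with h' | ⟨r, hr, _⟩
    · exact ih h' hc.2
    · exact absurd (List.head_eq_of_cons_eq hr) hc.1

lemma peel [Fintype α] [DecidableEq α] [Nonempty α] {k : ℕ} {w : List α}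
    (h : IsUniversal (k + 1) w) :
    ∃ a b : List α, w = a ++ b ∧ (∀ c : α, c ∈ a) ∧ IsUniversal k b := by
  have hall : ∀ c : α, c ∈ w := by
    intro c
    have := h (c :: List.replicate k c) (by simp)
    exact this.subset mem_cons_self
  have hP : ∃ m, ∀ c : α, c ∈ w.take m := ⟨w.length, by simpa using hall⟩
  let m := Nat.find hP
  have hm : ∀ c : α, c ∈ w.take m := Nat.find_spec hP
  have hm_le : m ≤ w.length := Nat.find_le (by simpa using hall)
  have hm_pos : 0 < m := by
    rcases ‹Nonempty α› with ⟨a⟩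
    rcases Nat.eq_zero_or_pos m with h0 | h0
    · have := hm a
      rw [h0] at this
      simp at this
    · exact h0
  obtain ⟨m', hm'⟩ : ∃ m', m = m' + 1 := ⟨m - 1, by omega⟩
  have hm'lt : m' < w.length := by omega
  set c := w.get ⟨m', hm'lt⟩ with hc
  have htake : w.take (m' + 1) = w.take m' ++ [c] := by
    rw [take_succ]
    simp [List.getElem?_eq_getElem hm'lt, hc]
  have hnotmem : c ∉ w.take m' := by
    have hmin : ¬ ∀ d : α, d ∈ w.take m' := Nat.find_min hP (by omega)
    push_neg at hmin
    obtain ⟨d, hd⟩ := hmin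
    have hdm : d ∈ w.take m := hm d
    rw [hm', htake, mem_append] at hdm
    rcases hdm with h' | h'
    · exact absurd h' hd
    · simp at h'
      rwa [h'] at hd
  refine ⟨w.take m, w.drop m, (take_append_drop m w).symm, hm, ?_⟩
  intro x hx
  have hcx : (c :: x) <+ w := h (c :: x) (by simp [hx])
  have hw : w = w.take m' ++ (c :: w.drop m) := by
    conv_lhs => rw [← take_append_drop m w]
    rw [hm', htake]
    simp
  rw [hw] at hcx
  have := cons_sublist_right_of_not_mem hcx hnotmem
  exact (cons_sublist_cons.mp this)

lemma isUniversal_one [Fintype α] {a : List α} (ha : ∀ c : α, c ∈ a) :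
    IsUniversal 1 a := by
  intro x hx
  rw [List.length_eq_one_iff] at hx
  obtain ⟨d, rfl⟩ := hx
  exact singleton_sublist.mpr (ha d)

lemma isUniversal_split [Fintype α] [DecidableEq α] :
    ∀ (k : ℕ) (v u : List α), IsUniversal k (v ++ u) →
      ∃ p q, IsUniversal p v ∧ IsUniversal q u ∧ k ≤ p + q + 1 := by
  intro k
  induction k with
  | zero =>
    intro v u _
    exact ⟨0, 0, isUniversal_zero v, isUniversal_zero u, by omega⟩
  | succ k ih =>
    intro v u h
    by_cases hα : Nonempty α
    · haveI := hα
      obtain ⟨a, b, hab, ha, hb⟩ := peel h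
      by_cases hle : a.length ≤ v.length
      · have hpre : a <+: v :=
          prefix_of_prefix_length_le ⟨b, hab.symm⟩ (prefix_append v u) hle
        obtain ⟨v', rfl⟩ := hpre
        have hbeq : b = v' ++ u := by
          have : a ++ (v' ++ u) = a ++ b := by rw [← hab]; simp
          exact (List.append_cancel_left this).symm
        rw [hbeq] at hb
        obtain ⟨p, q, hp, hq, hle2⟩ := ih v' u hb
        exact ⟨1 + p, q, isUniversal_append (isUniversal_one ha) hp, hq, by omega⟩
      · have hsuf : b <:+ u := by
          refine suffix_of_suffix_length_le ⟨a, hab.symm⟩ (suffix_append v u) ?_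
          have := congrArg List.length hab
          simp at this
          omega
        refine ⟨0, k, isUniversal_zero v, ?_, by omega⟩
        intro x hx
        exact (hb x hx).trans hsuf.sublist
    · exact ⟨k + 1, 0, isUniversal_of_isEmpty hα _ v, isUniversal_zero u, by omega⟩
theorem univIndex_le_circIndex_le_succ [Fintype α] [DecidableEq α] (w : List α)
    (halph : w.toFinset = Finset.univ) :
    univIndex w ≤ circIndex w ∧ circIndex w ≤ univIndex w + 1 := by
  classical
  by_cases hα : Nonempty α
  · haveI := hα
    have hSb : BddAbove {k | IsUniversal k w} :=
      ⟨w.length, fun k hk => isUniversal_le_length hk⟩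
    have hTb : BddAbove {k | ∃ u v : List α, w = u ++ v ∧ IsUniversal k (v ++ u)} := by
      refine ⟨w.length, fun k hk => ?_⟩
      obtain ⟨u, v, huv, h⟩ := hk
      have := isUniversal_le_length h
      rw [huv]
      simp only [length_append] at this ⊢
      omega
    have hST : {k | IsUniversal k w} ⊆
        {k | ∃ u v : List α, w = u ++ v ∧ IsUniversal k (v ++ u)} := by
      intro k hk
      exact ⟨[], w, by simp, by simpa using hk⟩
    constructor
    · exact csSup_le_csSup hTb ⟨0, isUniversal_zero w⟩ hST
    · have hTne : (0 : ℕ) ∈ {k | ∃ u v : List α, w = u ++ v ∧ IsUniversal k (v ++ u)} :=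
        ⟨[], w, by simp, by simpa using isUniversal_zero w⟩
      apply csSup_le ⟨0, hTne⟩
      rintro k ⟨u, v, rfl, h⟩
      obtain ⟨p, q, hv, hu, hle⟩ := isUniversal_split k v u h
      have hw : IsUniversal (q + p) (u ++ v) := isUniversal_append hu hv
      have hq : q + p ≤ univIndex (u ++ v) := le_csSup hSb hw
      omega
  · have hall : ∀ k, IsUniversal k w := fun k => isUniversal_of_isEmpty hα k w
    have hS : ¬ BddAbove {k | IsUniversal k w} := by
      rintro ⟨m, hm⟩
      have := hm (hall (m + 1))
      omega
    have hT : ¬ BddAbove {k | ∃ u v : List α, w = u ++ v ∧ IsUniversal k (v ++ u)} := by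
      rintro ⟨m, hm⟩
      have hmem : (m + 1) ∈ {k | ∃ u v : List α, w = u ++ v ∧ IsUniversal k (v ++ u)} :=
        ⟨[], w, by simp, by simpa using hall (m + 1)⟩
      have := hm hmem
      omega
    unfold univIndex circIndex
    rw [csSup_of_not_bddAbove hS, csSup_of_not_bddAbove hT]
    simp
end

section
/- For any word w over Σ with ι(w) = k ≥ 1, the word p = r(w^R)^R (the reversal of the remainder of the arch factorization of the reversal of w) is the longest prefix p of w such that ι(p^{-1} w) = k, where p^{-1} w denotes w with prefix p removed. -/
open List

variable {α : Type*}

section Helpers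

lemma find?_range'_min {p : ℕ → Bool} : ∀ (n s m : ℕ), (List.range' s n).find? p = some m →
    p m = true ∧ s ≤ m ∧ m < s + n ∧ ∀ j, s ≤ j → j < m → p j = false := by
  intro n
  induction n with
  | zero => intro s m h; simp [List.range'] at h
  | succ n ih =>
    intro s m h
    rw [List.range'_succ] at h
    by_cases hp : p s
    · rw [List.find?_cons_of_pos hp] at h
      cases h
      exact ⟨hp, le_refl _, by omega, fun j h1 h2 => by omega⟩
    · rw [List.find?_cons_of_neg hp] at h
      obtain ⟨h1, h2, h3, h4⟩ := ih (s+1) m h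
      refine ⟨h1, by omega, by omega, fun j hj1 hj2 => ?_⟩
      rcases eq_or_lt_of_le hj1 with rfl | hlt
      · simpa using hp
      · exact h4 j hlt hj2

variable [Fintype α] [DecidableEq α]

lemma arch_step [Nonempty α] {v : List α} (hv : v.toFinset = Finset.univ) :
    ∃ m, (List.range' 1 v.length).find?
        (fun m => decide ((v.take m).toFinset = Finset.univ)) = some m ∧
      1 ≤ m ∧ m ≤ v.length ∧ (v.take m).toFinset = Finset.univ ∧
      (∀ j, j < m → (v.take j).toFinset ≠ Finset.univ) ∧
      ∃ c x, v.take m = c ++ [x] ∧ x ∉ c := by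
  have hne : v ≠ [] := by
    rintro rfl
    have := Finset.mem_univ (Classical.arbitrary α)
    rw [← hv] at this; simp at this
  have hlen : 1 ≤ v.length := List.length_pos_iff.mpr hne
  obtain ⟨m, hm⟩ : ∃ m, (List.range' 1 v.length).find?
      (fun m => decide ((v.take m).toFinset = Finset.univ)) = some m := by
    cases hfind : (List.range' 1 v.length).find?
        (fun m => decide ((v.take m).toFinset = Finset.univ)) with
    | some m => exact ⟨m, rfl⟩
    | none =>
      exfalso
      have hmem : v.length ∈ List.range' 1 v.length := by
        rw [List.mem_range'_1]; omega
      have := List.find?_eq_none.mp hfind v.length hmem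
      simp [hv] at this
  obtain ⟨h1, h2, h3, h4⟩ := find?_range'_min _ _ _ hm
  have htake : (v.take m).toFinset = Finset.univ := of_decide_eq_true h1
  have hmin : ∀ j, j < m → (v.take j).toFinset ≠ Finset.univ := by
    intro j hj hfull
    rcases Nat.eq_zero_or_pos j with rfl | hj1
    · simp at hfull
      have := Finset.mem_univ (Classical.arbitrary α)
      rw [← hfull] at this; simp at this
    · have := h4 j hj1 hj
      simp [hfull] at this
  refine ⟨m, hm, h2, by omega, htake, hmin, ?_⟩
  have hm1 : m - 1 < v.length := by omega
  have hts : v.take m = v.take (m-1) ++ [v[m-1]'hm1] := by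
    have h := List.take_succ (l := v) (i := m-1)
    rw [List.getElem?_eq_getElem hm1] at h
    rw [show m - 1 + 1 = m by omega] at h
    simpa using h
  refine ⟨v.take (m-1), v[m-1]'hm1, hts, fun hmem => ?_⟩
  apply hmin (m-1) (by omega)
  have hsub2 : (v.take m).toFinset ⊆ (v.take (m-1)).toFinset := by
    rw [hts]
    intro y hy
    rw [List.toFinset_append, Finset.mem_union] at hy
    rcases hy with hy | hy
    · exact hy
    · simp only [List.toFinset_cons, List.toFinset_nil, insert_empty_eq,
        Finset.mem_singleton] at hy
      subst hy
      exact List.mem_toFinset.mpr hmem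
  rw [htake] at hsub2
  exact Finset.univ_subset_iff.mp hsub2

lemma archesAux_join : ∀ (n : ℕ) (v : List α), (archesAux n v).flatten ++ remAux n v = v := by
  intro n
  induction n with
  | zero => intro v; simp [archesAux, remAux]
  | succ n ih =>
    intro v
    cases hfind : (List.range' 1 v.length).find?
        (fun m => decide ((v.take m).toFinset = Finset.univ)) with
    | none => simp [archesAux, remAux, hfind]
    | some m => simp [archesAux, remAux, hfind, ih (v.drop m)]

lemma archesAux_full : ∀ (n : ℕ) (v b : List α), b ∈ archesAux n v → b.toFinset = Finset.univ := by
  intro n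
  induction n with
  | zero => intro v b h; simp [archesAux] at h
  | succ n ih =>
    intro v b h
    cases hfind : (List.range' 1 v.length).find?
        (fun m => decide ((v.take m).toFinset = Finset.univ)) with
    | none => simp [archesAux, hfind] at h
    | some m =>
      simp only [archesAux, hfind] at h
      rcases List.mem_cons.mp h with rfl | h'
      · exact of_decide_eq_true (find?_range'_min _ _ _ hfind).1
      · exact ih (v.drop m) b h'

lemma isUniversal_join {L : List (List α)}
    (hL : ∀ b ∈ L, b.toFinset = Finset.univ) (t : List α) :
    IsUniversal L.length (L.flatten ++ t) := by
  induction L generalizing t with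
  | nil =>
    intro u hu
    simp at hu
    simp [hu]
  | cons b L ih =>
    intro u hu
    cases u with
    | nil => simp at hu
    | cons x u' =>
      have hx : x ∈ b := by
        rw [← List.mem_toFinset, hL b (by simp)]; exact Finset.mem_univ x
      obtain ⟨c, d, rfl⟩ := List.append_of_mem hx
      have h' : u' <+ L.flatten ++ t :=
        ih (fun b hb => hL b (by simp [hb])) t u' (by simpa using hu)
      have h1 : x :: u' <+ x :: (d ++ (L.flatten ++ t)) :=
        List.cons_sublist_cons.mpr (h'.trans (List.sublist_append_right d _))
      have h2 : x :: (d ++ (L.flatten ++ t)) <+ (c ++ x :: d) ++ L.flatten ++ t := by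
        have := List.sublist_append_right c (x :: (d ++ (L.flatten ++ t)))
        simpa [List.append_assoc] using this
      exact h1.trans (by simpa using h2)

lemma cons_sublist_of_notMem {x : α} {t s : List α} :
    ∀ {c : List α}, x ∉ c → x :: t <+ c ++ s → x :: t <+ s := by
  intro c
  induction c with
  | nil => intro _ h; exact h
  | cons y c ih =>
    intro hx h
    simp only [List.mem_cons, not_or] at hx
    cases h with
    | cons _ h' => exact ih hx.2 h'
    | cons_cons _ h' => exact absurd rfl hx.1

lemma IsUniversal.mono_len [Nonempty α] {k j : ℕ} {w : List α}
    (h : IsUniversal k w) (hj : j ≤ k) : IsUniversal j w := by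
  intro u hu
  obtain ⟨a⟩ := ‹Nonempty α›
  have := h (u ++ List.replicate (k - j) a) (by simp [hu]; omega)
  exact (List.sublist_append_left u _).trans this

lemma univ_of_isUniversal [Nonempty α] {j : ℕ} {u : List α}
    (h : IsUniversal (j+1) u) : u.toFinset = Finset.univ := by
  apply Finset.eq_univ_iff_forall.mpr
  intro x
  rw [List.mem_toFinset]
  have := h (List.replicate (j+1) x) (by simp)
  exact this.subset (by simp)

lemma IsUniversal.rev {k : ℕ} {w : List α} (h : IsUniversal k w) :
    IsUniversal k w.reverse := by
  intro u hu
  have h1 := h u.reverse (by simp [hu])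
  have := h1.reverse
  rwa [List.reverse_reverse] at this

lemma greedy [Nonempty α] : ∀ (n : ℕ) (v u : List α), v.length ≤ n → u <+: v →
    ∀ j, IsUniversal j u →
    j ≤ (archesAux n v).length ∧
      ((archesAux n v).length ≤ j → (archesAux n v).flatten.length ≤ u.length) := by
  intro n
  induction n with
  | zero =>
    intro v u hlen hpre j hj
    have hv : v = [] := List.length_eq_zero_iff.mp (Nat.le_zero.mp hlen)
    subst hv
    have hu : u = [] := List.prefix_nil.mp hpre
    subst hu
    cases j with
    | zero => simp [archesAux]
    | succ i =>
      exfalso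
      have := univ_of_isUniversal hj
      simp at this
      have h2 := Finset.mem_univ (Classical.arbitrary α)
      rw [← this] at h2; simp at h2
  | succ n ih =>
    intro v u hlen hpre j hj
    cases j with
    | zero =>
      refine ⟨Nat.zero_le _, fun h => ?_⟩
      have h0 : archesAux (n+1) v = [] := List.length_eq_zero_iff.mp (Nat.le_zero.mp h)
      simp [h0]
    | succ i =>
      have hu_full := univ_of_isUniversal hj
      have hv_full : v.toFinset = Finset.univ := by
        have hsub : u.toFinset ⊆ v.toFinset := fun y hy => by
          rw [List.mem_toFinset] at *
          exact hpre.sublist.subset hy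
        rw [hu_full] at hsub
        exact Finset.univ_subset_iff.mp hsub
      obtain ⟨m, hfind, hm1, hmlen, htake_full, hmin, c, x, hdecomp, hxc⟩ := arch_step hv_full
      have hmu : m ≤ u.length := by
        by_contra hcon
        push_neg at hcon
        have heq : u = v.take u.length := List.prefix_iff_eq_take.mp hpre
        exact hmin u.length (by omega) (by rw [← heq]; exact hu_full)
      have hutake : u.take m = v.take m := by
        conv_lhs => rw [List.prefix_iff_eq_take.mp hpre]
        rw [List.take_take, min_eq_left hmu]
      have hudecomp : u = v.take m ++ u.drop m := by
        rw [← hutake, List.take_append_drop]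
      have hdrop_pre : u.drop m <+: v.drop m := by
        obtain ⟨t, ht⟩ := hpre
        exact ⟨t, by rw [← ht, List.drop_append_of_le_length hmu]⟩
      have hu' : IsUniversal i (u.drop m) := by
        intro s hs
        have h1 : x :: s <+ u := hj (x :: s) (by simp [hs])
        rw [hudecomp, hdecomp, List.append_assoc, List.singleton_append] at h1
        exact List.cons_sublist_cons.mp (cons_sublist_of_notMem hxc h1)
      have hlen' : (v.drop m).length ≤ n := by
        rw [List.length_drop]; omega
      obtain ⟨ha, hb⟩ := ih (v.drop m) (u.drop m) hlen' hdrop_pre i hu'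
      have harch : archesAux (n+1) v = (v.take m) :: archesAux n (v.drop m) := by
        simp only [archesAux, hfind]
      rw [harch]
      have hlen_take : (v.take m).length = m := by
        rw [List.length_take]; omega
      have hulen : u.length = m + (u.drop m).length := by
        rw [List.length_drop]; omega
      constructor
      · simp; omega
      · intro h
        simp only [List.length_cons] at h
        have hb' := hb (by omega)
        show ((v.take m) ++ (archesAux n (v.drop m)).flatten).length ≤ u.length
        rw [List.length_append, hlen_take]
        omega

lemma isUniversal_iff [Nonempty α] {v : List α} {j : ℕ} :
    IsUniversal j v ↔ j ≤ (arches v).length := by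
  constructor
  · intro h
    exact (greedy v.length v v le_rfl (List.prefix_refl v) j h).1
  · intro h
    have h1 : IsUniversal (arches v).length v := by
      have := isUniversal_join (fun b hb => archesAux_full v.length v b hb) (remAux v.length v)
      rwa [archesAux_join] at this
    exact h1.mono_len h

lemma univIndex_eq [Nonempty α] (v : List α) : univIndex v = (arches v).length := by
  unfold univIndex
  have hset : {k | IsUniversal k v} = Set.Iic (arches v).length :=
    Set.ext fun j => isUniversal_iff
  rw [hset, csSup_Iic]

lemma univIndex_reverse (v : List α) : univIndex v.reverse = univIndex v := by
  unfold univIndex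
  congr 1
  ext j
  constructor
  · intro h
    have := h.rev
    rwa [List.reverse_reverse] at this
  · exact fun h => h.rev

end Helpers

theorem longest_removable_prefix [Fintype α] [DecidableEq α] (w : List α) (k : ℕ)
    (hk : univIndex w = k) (hk1 : 1 ≤ k) :
    (rem w.reverse).reverse <+: w ∧
      univIndex (w.drop (rem w.reverse).length) = k ∧
      ∀ p : List α, p <+: w → univIndex (w.drop p.length) = k →
        p.length ≤ (rem w.reverse).length := by
  rcases isEmpty_or_nonempty α with hα | hα
  · have hw : w = [] := by
      cases w with
      | nil => rfl
      | cons a _ => exact (hα.false a).elim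
    subst hw
    have hr : rem ([] : List α) = [] := rfl
    refine ⟨by simp [hr], by simpa [hr] using hk, fun p hp _ => by
      simp [List.prefix_nil.mp hp, hr]⟩
  · have hfact : (arches w.reverse).flatten ++ rem w.reverse = w.reverse :=
      archesAux_join _ _
    have hklen : (arches w.reverse).length = k := by
      rw [← univIndex_eq, univIndex_reverse, hk]
    have hw_eq : w = (rem w.reverse).reverse ++ (arches w.reverse).flatten.reverse := by
      have h := congrArg List.reverse hfact
      rw [List.reverse_append, List.reverse_reverse] at h
      exact h.symm
    have hdrop_gen : ∀ (a b w' : List α), w' = a ++ b → w'.drop a.length = b := by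
      intro a b w' h; rw [h]; exact List.drop_left
    refine ⟨⟨_, hw_eq.symm⟩, ?_, ?_⟩
    · have hdrop := hdrop_gen _ _ _ hw_eq
      rw [List.length_reverse] at hdrop
      rw [hdrop]
      have h1 : IsUniversal k ((arches w.reverse).flatten.reverse) := by
        rw [List.reverse_flatten]
        have hfull : ∀ b ∈ ((arches w.reverse).map List.reverse).reverse,
            b.toFinset = Finset.univ := by
          intro b hb
          simp only [List.mem_reverse, List.mem_map] at hb
          obtain ⟨a, ha, rfl⟩ := hb
          rw [List.toFinset_reverse]
          exact archesAux_full _ _ _ ha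
        have := isUniversal_join hfull []
        simpa [hklen] using this
      have h2 : ¬ IsUniversal (k+1) ((arches w.reverse).flatten.reverse) := by
        intro hcon
        have hsub : (arches w.reverse).flatten.reverse <+ w := by
          conv_rhs => rw [hw_eq]
          exact List.sublist_append_right _ _
        have hW : IsUniversal (k+1) w := fun u hu => (hcon u hu).trans hsub
        have := isUniversal_iff.mp hW
        rw [← univIndex_eq, hk] at this
        omega
      rw [univIndex_eq]
      have h3 := isUniversal_iff.mp h1
      have h4 : ¬ (k+1 ≤ (arches ((arches w.reverse).flatten.reverse)).length) :=
        fun hc => h2 (isUniversal_iff.mpr hc)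
      omega
    · intro p hp hup
      have hws : w = p ++ w.drop p.length := by
        conv_lhs => rw [← List.take_append_drop p.length w]
        congr 1
        exact (List.prefix_iff_eq_take.mp hp).symm
      have hkus : IsUniversal k (w.drop p.length) := by
        rw [isUniversal_iff, ← univIndex_eq, hup]
      have hpre : (w.drop p.length).reverse <+: w.reverse :=
        ⟨p.reverse, by rw [← List.reverse_append, ← hws]⟩
      obtain ⟨-, hb⟩ := greedy w.reverse.length w.reverse (w.drop p.length).reverse
        le_rfl hpre k hkus.rev
      have hJ : (arches w.reverse).flatten.length ≤ (w.drop p.length).reverse.length :=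
        hb (le_of_eq hklen)
      rw [List.length_reverse] at hJ
      have hlen1 : (arches w.reverse).flatten.length + (rem w.reverse).length = w.length := by
        have h := congrArg List.length hfact
        rw [List.length_append, List.length_reverse] at h
        exact h
      have hlen2 : w.length = p.length + (w.drop p.length).length := by
        have h := congrArg List.length hws
        rw [List.length_append] at h
        exact h
      omega
end

section
/- Let u, v, w be words over Σ with alph(u) = alph(v) ⊊ Σ and ι(w) ≥ 1. Then r(uw) = r(vw), i.e. the remainder of the arch factorization of uw depends only on the set of letters of u. -/
open List

variable {α : Type*}

lemma remAux_nil [Fintype α] [DecidableEq α] (n : ℕ) : remAux (α := α) n [] = [] := by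
  cases n <;> simp [remAux]

lemma remAux_congr [Fintype α] [DecidableEq α] :
    ∀ n m (w : List α), w.length ≤ n → w.length ≤ m → remAux n w = remAux m w := by
  intro n
  induction n with
  | zero =>
    intro m w hn _
    obtain rfl : w = [] := List.length_eq_zero_iff.mp (Nat.le_zero.mp hn)
    rw [remAux_nil, remAux_nil]
  | succ n ih =>
    intro m w hn hm
    cases m with
    | zero =>
      obtain rfl : w = [] := List.length_eq_zero_iff.mp (Nat.le_zero.mp hm)
      rw [remAux_nil, remAux_nil]
    | succ m =>
      simp only [remAux]
      cases hfind : (List.range' 1 w.length).find?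
          (fun m => decide ((w.take m).toFinset = Finset.univ)) with
      | none => rfl
      | some k =>
        have hk := List.mem_of_find?_eq_some hfind
        rw [List.mem_range'_1] at hk
        have hd : (w.drop k).length = w.length - k := List.length_drop
        exact ih m (w.drop k) (by omega) (by omega)

lemma rem_step [Fintype α] [DecidableEq α] (w : List α) (m : ℕ)
    (h : (List.range' 1 w.length).find?
      (fun m => decide ((w.take m).toFinset = Finset.univ)) = some m) :
    rem w = rem (w.drop m) := by
  have hm := List.mem_of_find?_eq_some h
  rw [List.mem_range'_1] at hm
  obtain ⟨l, hl⟩ : ∃ l, w.length = l + 1 := ⟨w.length - 1, by omega⟩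
  unfold rem
  conv_lhs => rw [hl]
  simp only [remAux, h]
  have hd : (w.drop m).length = w.length - m := List.length_drop
  exact remAux_congr l (w.drop m).length (w.drop m) (by omega) le_rfl

lemma myFind?_range'_eq_some {p : ℕ → Bool} :
    ∀ (s n m : ℕ), s ≤ m → m < s + n → p m = true → (∀ k, s ≤ k → k < m → p k = false) →
    (List.range' s n).find? p = some m := by
  intro s n
  induction n generalizing s with
  | zero => intro m h1 h2; omega
  | succ n ih =>
    intro m h1 h2 h3 h4
    rw [List.range'_succ]
    by_cases h : s = m
    · subst h
      rw [List.find?_cons_of_pos h3]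
    · have hps : p s = false := h4 s le_rfl (lt_of_le_of_ne h1 h)
      rw [List.find?_cons_of_neg (by simp [hps])]
      exact ih (s + 1) m (by omega) (by omega) h3 (fun k hk1 hk2 => h4 k (by omega) hk2)

lemma rem_append_key [Fintype α] [DecidableEq α] (u w : List α)
    (hne : u.toFinset ≠ Finset.univ) (p₀ : ℕ) (h1 : 1 ≤ p₀) (h2 : p₀ ≤ w.length)
    (hp : u.toFinset ∪ (w.take p₀).toFinset = Finset.univ)
    (hmin : ∀ k < p₀, u.toFinset ∪ (w.take k).toFinset ≠ Finset.univ) :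
    rem (u ++ w) = rem (w.drop p₀) := by
  have hfind : (List.range' 1 (u ++ w).length).find?
      (fun m => decide (((u ++ w).take m).toFinset = Finset.univ)) = some (u.length + p₀) := by
    apply myFind?_range'_eq_some
    · omega
    · rw [List.length_append]; omega
    · simp only [decide_eq_true_eq, List.take_length_add_append, List.toFinset_append]
      exact hp
    · intro k hk1 hk2
      simp only [decide_eq_false_iff_not]
      by_cases hk : k ≤ u.length
      · rw [List.take_append_of_le_length hk]
        intro hcon
        apply hne
        apply Finset.univ_subset_iff.mp
        rw [← hcon]
        intro x hx
        rw [List.mem_toFinset] at hx ⊢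
        exact (List.take_subset k u) hx
      · have hk' : k = u.length + (k - u.length) := by omega
        rw [hk', List.take_length_add_append, List.toFinset_append]
        exact hmin (k - u.length) (by omega)
  rw [rem_step (u ++ w) (u.length + p₀) hfind, List.drop_length_add_append]

lemma toFinset_univ_of_univIndex [Fintype α] [DecidableEq α] [Nonempty α] (w : List α)
    (hw : 1 ≤ univIndex w) : w.toFinset = Finset.univ := by
  have hS0 : (0 : ℕ) ∈ {k | IsUniversal k w} := by
    intro x hx
    obtain rfl : x = [] := List.length_eq_zero_iff.mp hx
    exact List.nil_sublist w
  have hbdd : BddAbove {k | IsUniversal k w} := by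
    obtain ⟨a⟩ := ‹Nonempty α›
    refine ⟨w.length, fun k hk => ?_⟩
    have := (hk (List.replicate k a) (by simp)).length_le
    simpa using this
  have hmem : univIndex w ∈ {k | IsUniversal k w} := Nat.sSup_mem ⟨0, hS0⟩ hbdd
  apply Finset.eq_univ_iff_forall.mpr
  intro b
  rw [List.mem_toFinset]
  have hs := hmem (List.replicate (univIndex w) b) (by simp)
  have hb : b ∈ List.replicate (univIndex w) b := List.mem_replicate.mpr ⟨by omega, rfl⟩
  exact hs.subset hb

theorem rem_prepend_depends_only_on_alph [Fintype α] [DecidableEq α] (u v w : List α)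
    (huv : u.toFinset = v.toFinset) (hne : u.toFinset ≠ Finset.univ)
    (hw : 1 ≤ univIndex w) :
    rem (u ++ w) = rem (v ++ w) := by
  have hα : Nonempty α := by
    rcases isEmpty_or_nonempty α with h | h
    · exfalso
      apply hne
      apply Finset.eq_univ_iff_forall.mpr
      intro b
      exact (h.false b).elim
    · exact h
  have hwuniv : w.toFinset = Finset.univ := toFinset_univ_of_univIndex w hw
  have hQex : ∃ p, u.toFinset ∪ (w.take p).toFinset = Finset.univ :=
    ⟨w.length, by simp [hwuniv]⟩
  classical
  set p₀ := Nat.find hQex with hp₀def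
  have hp : u.toFinset ∪ (w.take p₀).toFinset = Finset.univ := Nat.find_spec hQex
  have hmin : ∀ k < p₀, u.toFinset ∪ (w.take k).toFinset ≠ Finset.univ :=
    fun k hk => Nat.find_min hQex hk
  have h1 : 1 ≤ p₀ := by
    by_contra h
    have : p₀ = 0 := by omega
    rw [this] at hp
    simp at hp
    exact hne hp
  have h2 : p₀ ≤ w.length :=
    Nat.find_le (by simp [hwuniv])
  rw [rem_append_key u w hne p₀ h1 h2 hp hmin,
    rem_append_key v w (huv ▸ hne) p₀ h1 h2 (huv ▸ hp) (fun k hk => huv ▸ hmin k hk)]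
end

section
/- Let w be a word over Σ with ι(w) ≥ 1 and s ∈ ℕ. Then r(w^s) = r(r(w^{s−1})·w), i.e. the remainder of a power can be computed recursively from the remainder of the previous power. -/
open List

variable {α : Type*}

section Aux

lemma myFind_spec : ∀ (n s m : ℕ) (p : ℕ → Bool),
    (List.range' s n).find? p = some m →
    p m = true ∧ s ≤ m ∧ m < s + n ∧ ∀ k, s ≤ k → k < m → p k = false := by
  intro n
  induction n with
  | zero => intro s m p h; simp [List.range'] at h
  | succ n ih =>
    intro s m p h
    rw [show List.range' s (n+1) = s :: List.range' (s+1) n from List.range'_succ] at h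
    by_cases hp : p s = true
    · rw [List.find?_cons_of_pos hp] at h
      cases h
      exact ⟨hp, le_refl _, by omega, fun k hk1 hk2 => by omega⟩
    · rw [List.find?_cons_of_neg hp] at h
      obtain ⟨h1, h2, h3, h4⟩ := ih (s+1) m p h
      refine ⟨h1, by omega, by omega, fun k hk1 hk2 => ?_⟩
      rcases eq_or_lt_of_le hk1 with rfl | hlt
      · simpa using hp
      · exact h4 k hlt hk2

lemma myFind_eq_some : ∀ (n s m : ℕ) (p : ℕ → Bool),
    s ≤ m → m < s + n → p m = true → (∀ k, s ≤ k → k < m → p k = false) →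
    (List.range' s n).find? p = some m := by
  intro n
  induction n with
  | zero => intro s m p h1 h2; omega
  | succ n ih =>
    intro s m p h1 h2 hp hmin
    rw [show List.range' s (n+1) = s :: List.range' (s+1) n from List.range'_succ]
    rcases eq_or_lt_of_le h1 with rfl | hlt
    · rw [List.find?_cons_of_pos hp]
    · rw [List.find?_cons_of_neg (by simp [hmin s le_rfl hlt])]
      exact ih (s+1) m p hlt (by omega) hp (fun k hk1 hk2 => hmin k (by omega) hk2)

variable [Fintype α] [DecidableEq α]

lemma remAux_eq_rem : ∀ (n : ℕ) (w : List α), w.length ≤ n → remAux n w = rem w := by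
  intro n
  induction n using Nat.strong_induction_on with
  | _ n ih =>
    rcases n with _ | n
    · intro w hw
      have : w = [] := List.eq_nil_of_length_eq_zero (by omega)
      subst this; rfl
    · intro w hw
      rcases h : (List.range' 1 w.length).find?
          (fun m => decide ((w.take m).toFinset = Finset.univ)) with _ | m
      · rcases hl : w.length with _ | k
        · have : w = [] := List.eq_nil_of_length_eq_zero hl
          subst this; rfl
        · rw [rem, hl, remAux, remAux, h]
      · obtain ⟨hp, hm1, hm2, _⟩ := myFind_spec _ _ _ _ h
        rcases hl : w.length with _ | k
        · omega
        · rw [rem, hl, remAux, remAux, h]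
          show remAux n (w.drop m) = remAux k (w.drop m)
          rw [ih n (by omega) _ (by rw [List.length_drop]; omega),
            ih k (by omega) _ (by rw [List.length_drop]; omega)]

lemma rem_append_rem : ∀ (n : ℕ) (u : List α), u.length ≤ n → ∀ v : List α,
    rem (u ++ v) = rem (rem u ++ v) := by
  intro n
  induction n with
  | zero =>
    intro u hu v
    have : u = [] := List.eq_nil_of_length_eq_zero (by omega)
    subst this
    simp [rem, remAux]
  | succ n ih =>
    intro u hu v
    rcases h : (List.range' 1 u.length).find?
        (fun m => decide ((u.take m).toFinset = Finset.univ)) with _ | m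
    -- case none : rem u = u
    · have hru : rem u = u := by
        rcases hl : u.length with _ | k
        · have : u = [] := List.eq_nil_of_length_eq_zero hl
          subst this; rfl
        · rw [rem, hl, remAux, h]
      rw [hru]
    · obtain ⟨hp, hm1, hm2, hmin⟩ := myFind_spec _ _ _ _ h
      simp only [decide_eq_true_eq] at hp
      have hmu : m ≤ u.length := by omega
      -- find? for u ++ v also returns m
      have huv : (List.range' 1 (u ++ v).length).find?
          (fun k => decide (((u ++ v).take k).toFinset = Finset.univ)) = some m := by
        apply myFind_eq_some
        · exact hm1
        · rw [List.length_append]; omega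
        · simp [List.take_append_of_le_length hmu, hp]
        · intro k hk1 hk2
          rw [List.take_append_of_le_length (by omega)]
          have := hmin k hk1 hk2
          simpa using this
      -- unfold rem (u ++ v)
      obtain ⟨k1, hl1⟩ : ∃ k1, (u ++ v).length = k1 + 1 := by
        rw [List.length_append]; exact ⟨u.length + v.length - 1, by omega⟩
      have e1 : rem (u ++ v) = rem (u.drop m ++ v) := by
        rw [rem, hl1, remAux, huv]
        show remAux k1 ((u ++ v).drop m) = rem (u.drop m ++ v)
        rw [List.drop_append_of_le_length hmu]
        apply remAux_eq_rem
        have : (u ++ v).length = u.length + v.length := List.length_append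
        rw [List.length_append, List.length_drop]
        omega
      -- unfold rem u
      obtain ⟨k2, hl2⟩ : ∃ k2, u.length = k2 + 1 := ⟨u.length - 1, by omega⟩
      have e2 : rem u = rem (u.drop m) := by
        rw [rem, hl2, remAux, h]
        show remAux k2 (u.drop m) = rem (u.drop m)
        apply remAux_eq_rem
        rw [List.length_drop]; omega
      rw [e1, e2, ih (u.drop m) (by rw [List.length_drop]; omega) v]

lemma rem_append (u v : List α) : rem (u ++ v) = rem (rem u ++ v) :=
  rem_append_rem u.length u le_rfl v

end Aux

theorem rem_pow_rec [Fintype α] [DecidableEq α] (w : List α)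
    (hw : 1 ≤ univIndex w) (s : ℕ) (hs : 1 ≤ s) :
    rem (wpow w s) = rem (rem (wpow w (s - 1)) ++ w) := by
  obtain ⟨t, rfl⟩ : ∃ t, s = t + 1 := ⟨s - 1, by omega⟩
  have hpow : wpow w (t + 1) = wpow w t ++ w := by
    rw [wpow, wpow, List.replicate_succ']
    simp [wpow]
  simp only [Nat.add_sub_cancel, hpow]
  exact rem_append (wpow w t) w
end

section
/- Let w be a word over Σ with ι(w) = k ≥ 1 and s ∈ ℕ₀. If ι(w^{s+1}) − ι(w^s) = k then r(w^s) is a suffix of r(w^{s+1}); and if ι(w^{s+1}) − ι(w^s) = k + 1 then r(w^{s+1}) is a suffix of r(w^s). -/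
open List

variable {α : Type*}

namespace ArchAux

/-- The end position of the first arch, if any. -/
def step? [Fintype α] [DecidableEq α] (z : List α) : Option ℕ :=
  (List.range' 1 z.length).find? (fun m => decide ((z.take m).toFinset = Finset.univ))

theorem find?_range'_eq_some {p : ℕ → Bool} :
    ∀ {n a m : ℕ}, ((List.range' a n).find? p = some m ↔
      (a ≤ m ∧ m < a + n ∧ p m = true ∧ ∀ j, a ≤ j → j < m → ¬ p j = true)) := by
  intro n
  induction n with
  | zero =>
    intro a m
    simp only [List.range', List.find?_nil]
    constructor
    · intro h; cases h
    · rintro ⟨h1, h2, -, -⟩; omega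
  | succ n ih =>
    intro a m
    rw [List.range'_succ]
    by_cases h : p a = true
    · rw [List.find?_cons_of_pos h]
      constructor
      · intro he
        have : a = m := by cases he; rfl
        subst this
        exact ⟨le_refl _, by omega, h, fun j h1 h2 => by omega⟩
      · rintro ⟨h1, h2, h3, h4⟩
        have : a = m := by
          by_contra hne
          exact h4 a (le_refl _) (by omega) h
        rw [this]
    · rw [List.find?_cons_of_neg h]
      rw [ih]
      constructor
      · rintro ⟨h1, h2, h3, h4⟩
        refine ⟨by omega, by omega, h3, fun j hj1 hj2 => ?_⟩
        rcases eq_or_lt_of_le hj1 with rfl | hlt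
        · exact h
        · exact h4 j hlt hj2
      · rintro ⟨h1, h2, h3, h4⟩
        have hne : a ≠ m := by rintro rfl; exact h h3
        exact ⟨by omega, by omega, h3, fun j hj1 hj2 => h4 j (by omega) hj2⟩

variable [Fintype α] [DecidableEq α]

theorem step?_some_iff {z : List α} {m : ℕ} :
    step? z = some m ↔
      (1 ≤ m ∧ m ≤ z.length ∧ (z.take m).toFinset = Finset.univ ∧
        ∀ j, 1 ≤ j → j < m → (z.take j).toFinset ≠ Finset.univ) := by
  rw [step?, find?_range'_eq_some]
  simp only [decide_eq_true_eq]
  constructor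
  · rintro ⟨h1, h2, h3, h4⟩
    exact ⟨h1, by omega, h3, fun j hj1 hj2 hj3 => h4 j hj1 hj2 hj3⟩
  · rintro ⟨h1, h2, h3, h4⟩
    exact ⟨h1, by omega, h3, fun j hj1 hj2 hj3 => h4 j hj1 hj2 hj3⟩

theorem toFinset_take_subset (n : ℕ) (z : List α) :
    (z.take n).toFinset ⊆ z.toFinset := fun a ha =>
  List.mem_toFinset.mpr ((List.take_sublist n z).subset (List.mem_toFinset.mp ha))

theorem step?_none_iff [Nonempty α] {z : List α} :
    step? z = none ↔ z.toFinset ≠ Finset.univ := by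
  constructor
  · intro h hz
    rcases Nat.eq_zero_or_pos z.length with hl | hl
    · rw [List.length_eq_zero_iff.mp hl] at hz
      simp only [List.toFinset_nil] at hz
      obtain ⟨a⟩ := ‹Nonempty α›
      have := hz ▸ Finset.mem_univ a
      simp at this
    · rw [step?, List.find?_eq_none] at h
      have := h z.length (by rw [List.mem_range'_1]; omega)
      rw [List.take_length] at this
      simp [hz] at this
  · intro h
    rw [step?, List.find?_eq_none]
    intro m hm hp
    rw [decide_eq_true_eq] at hp
    exact h (Finset.univ_subset_iff.mp (hp ▸ toFinset_take_subset m z))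

theorem remAux_succ_def (n : ℕ) (z : List α) :
    remAux (n+1) z = match step? z with
      | none => z
      | some m => remAux n (z.drop m) := rfl

theorem archesAux_succ_def (n : ℕ) (z : List α) :
    archesAux (n+1) z = match step? z with
      | none => []
      | some m => (z.take m) :: archesAux n (z.drop m) := rfl

theorem step?_nil : step? ([] : List α) = none := rfl

theorem remAux_succ_eq : ∀ (n : ℕ) (z : List α), z.length ≤ n → remAux (n+1) z = remAux n z := by
  intro n
  induction n with
  | zero =>
    intro z hz
    have hz0 : z = [] := List.length_eq_zero_iff.mp (by omega)
    subst hz0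
    rw [remAux_succ_def, step?_nil]
    rfl
  | succ n ih =>
    intro z hz
    rw [remAux_succ_def (n+1), remAux_succ_def n]
    cases h : step? z with
    | none => rfl
    | some m =>
      obtain ⟨h1, h2, -, -⟩ := step?_some_iff.mp h
      exact ih (z.drop m) (by simp only [List.length_drop]; omega)

theorem archesAux_succ_eq : ∀ (n : ℕ) (z : List α), z.length ≤ n →
    archesAux (n+1) z = archesAux n z := by
  intro n
  induction n with
  | zero =>
    intro z hz
    have hz0 : z = [] := List.length_eq_zero_iff.mp (by omega)
    subst hz0
    rw [archesAux_succ_def, step?_nil]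
    rfl
  | succ n ih =>
    intro z hz
    rw [archesAux_succ_def (n+1), archesAux_succ_def n]
    cases h : step? z with
    | none => rfl
    | some m =>
      obtain ⟨h1, h2, -, -⟩ := step?_some_iff.mp h
      show z.take m :: archesAux (n+1) (z.drop m) = z.take m :: archesAux n (z.drop m)
      rw [ih (z.drop m) (by simp only [List.length_drop]; omega)]

theorem remAux_eq_rem (z : List α) : ∀ n, z.length ≤ n → remAux n z = rem z := by
  intro n hn
  induction n, hn using Nat.le_induction with
  | base => rfl
  | succ n hn ih => rw [remAux_succ_eq n z hn, ih]

theorem archesAux_eq_arches (z : List α) : ∀ n, z.length ≤ n → archesAux n z = arches z := by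
  intro n hn
  induction n, hn using Nat.le_induction with
  | base => rfl
  | succ n hn ih => rw [archesAux_succ_eq n z hn, ih]

theorem rem_of_none {z : List α} (h : step? z = none) : rem z = z := by
  unfold rem
  cases hl : z.length with
  | zero => rfl
  | succ l =>
    rw [remAux_succ_def, h]

theorem rem_of_some {z : List α} {m : ℕ} (h : step? z = some m) :
    rem z = rem (z.drop m) := by
  obtain ⟨h1, h2, -, -⟩ := step?_some_iff.mp h
  obtain ⟨l, hl⟩ : ∃ l, z.length = l + 1 := ⟨z.length - 1, by omega⟩
  unfold rem
  rw [hl, remAux_succ_def, h]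
  show remAux l (z.drop m) = rem (z.drop m)
  exact remAux_eq_rem (z.drop m) l (by simp only [List.length_drop]; omega)

theorem arches_of_none {z : List α} (h : step? z = none) : arches z = [] := by
  unfold arches
  cases hl : z.length with
  | zero => rfl
  | succ l =>
    rw [archesAux_succ_def, h]

theorem arches_of_some {z : List α} {m : ℕ} (h : step? z = some m) :
    arches z = z.take m :: arches (z.drop m) := by
  obtain ⟨h1, h2, -, -⟩ := step?_some_iff.mp h
  obtain ⟨l, hl⟩ : ∃ l, z.length = l + 1 := ⟨z.length - 1, by omega⟩
  unfold arches
  rw [hl, archesAux_succ_def, h]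
  show z.take m :: archesAux l (z.drop m) = z.take m :: arches (z.drop m)
  rw [archesAux_eq_arches (z.drop m) l (by simp only [List.length_drop]; omega)]

/-- Number of arches. -/
def acount (z : List α) : ℕ := (arches z).length

/-- Remove the first arch (if any). -/
def peel (z : List α) : List α :=
  match step? z with
  | none => z
  | some m => z.drop m

theorem peel_of_none {z : List α} (h : step? z = none) : peel z = z := by
  unfold peel; rw [h]

theorem peel_of_some {z : List α} {m : ℕ} (h : step? z = some m) : peel z = z.drop m := by
  unfold peel; rw [h]

theorem acount_of_none {z : List α} (h : step? z = none) : acount z = 0 := by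
  unfold acount; rw [arches_of_none h]; rfl

theorem acount_of_some {z : List α} {m : ℕ} (h : step? z = some m) :
    acount z = acount (z.drop m) + 1 := by
  unfold acount; rw [arches_of_some h]; rfl

theorem step?_exists {z : List α} (h : 1 ≤ acount z) : ∃ m, step? z = some m := by
  cases hs : step? z with
  | none => rw [acount_of_none hs] at h; omega
  | some m => exact ⟨m, rfl⟩

theorem peel_suffix (z : List α) : peel z <:+ z := by
  cases h : step? z with
  | none => rw [peel_of_none h]
  | some m => rw [peel_of_some h]; exact List.drop_suffix m z

theorem iterate_peel_suffix (j : ℕ) (z : List α) : peel^[j] z <:+ z := by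
  induction j with
  | zero => exact List.suffix_rfl
  | succ j ih =>
    rw [Function.iterate_succ_apply']
    exact (peel_suffix _).trans ih

theorem acount_iterate (j : ℕ) : ∀ (z : List α), j ≤ acount z →
    acount (peel^[j] z) + j = acount z := by
  induction j with
  | zero => intro z _; simp
  | succ j ih =>
    intro z hz
    obtain ⟨m, hm⟩ := step?_exists (z := z) (by omega)
    have h1 : acount z = acount (z.drop m) + 1 := acount_of_some hm
    rw [Function.iterate_succ_apply, peel_of_some hm]
    have := ih (z.drop m) (by omega)
    omega

theorem join_arches : ∀ z : List α, (arches z).flatten ++ rem z = z := by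
  intro z
  cases h : step? z with
  | none => rw [arches_of_none h, rem_of_none h]; rfl
  | some m =>
    obtain ⟨h1, h2, -, -⟩ := step?_some_iff.mp h
    rw [arches_of_some h, rem_of_some h]
    have ih := join_arches (z.drop m)
    simp only [List.flatten_cons, List.append_assoc, ih]
    exact List.take_append_drop m z
termination_by z => z.length
decreasing_by simp only [List.length_drop]; omega

theorem arches_cover : ∀ (z : List α), ∀ A ∈ arches z, A.toFinset = Finset.univ := by
  intro z
  cases h : step? z with
  | none => rw [arches_of_none h]; intro A hA; cases hA
  | some m =>
    obtain ⟨h1, h2, hcov, -⟩ := step?_some_iff.mp h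
    rw [arches_of_some h]
    intro A hA
    rcases List.mem_cons.mp hA with rfl | hA
    · exact hcov
    · exact arches_cover (z.drop m) A hA
termination_by z => z.length
decreasing_by simp only [List.length_drop]; omega

theorem universal_join {L : List (List α)} (hL : ∀ A ∈ L, A.toFinset = Finset.univ) :
    ∀ u : List α, u.length = L.length → u <+ L.flatten := by
  induction L with
  | nil =>
    intro u hu
    rw [List.length_eq_zero_iff.mp hu]
    exact List.nil_sublist _
  | cons A L ih =>
    intro u hu
    cases u with
    | nil => exact List.nil_sublist _
    | cons a u' =>
      simp only [List.length_cons, Nat.succ.injEq] at hu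
      have ha : a ∈ A := by
        have := hL A List.mem_cons_self
        have : a ∈ A.toFinset := this ▸ Finset.mem_univ a
        exact List.mem_toFinset.mp this
      have h2 : u' <+ L.flatten := ih (fun B hB => hL B (List.mem_cons_of_mem _ hB)) u' hu
      simpa using List.Sublist.append (List.singleton_sublist.mpr ha) h2

theorem universal_acount (z : List α) : IsUniversal (acount z) z := by
  intro u hu
  have h1 : u <+ (arches z).flatten := universal_join (arches_cover z) u hu
  have h2 : (arches z).flatten <+ z := by
    conv_rhs => rw [← join_arches z]
    exact List.sublist_append_left _ _
  exact h1.trans h2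

theorem exists_bad [Nonempty α] : ∀ z : List α, ∃ u : List α,
    u.length = acount z + 1 ∧ ¬ u <+ z := by
  intro z
  cases h : step? z with
  | none =>
    have hz := step?_none_iff.mp h
    obtain ⟨c, hc⟩ : ∃ c, c ∉ z.toFinset := by
      by_contra h'
      push_neg at h'
      exact hz (Finset.eq_univ_iff_forall.mpr h')
    refine ⟨[c], by simp [acount_of_none h], fun hs => ?_⟩
    exact hc (List.mem_toFinset.mpr (hs.subset (by simp)))
  | some m =>
    obtain ⟨hm1, hm2, hcov, hmin⟩ := step?_some_iff.mp h
    obtain ⟨u', hu1, hu2⟩ := exists_bad (z.drop m)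
    have hAlen : (z.take m).length = m := by
      rw [List.length_take]; omega
    have hAne : z.take m ≠ [] := by
      intro he
      rw [he] at hAlen
      simp at hAlen
      omega
    set a := (z.take m).getLast hAne with ha
    have hsplit : (z.take m).dropLast ++ [a] = z.take m := List.dropLast_append_getLast hAne
    have hdl : (z.take m).dropLast = z.take (m - 1) := by
      rw [List.dropLast_eq_take, hAlen, List.take_take]
      congr 1
      omega
    have hnotmem : a ∉ (z.take m).dropLast := by
      intro hmem
      have h1 : (z.take m).toFinset = (z.take m).dropLast.toFinset := by
        conv_lhs => rw [← hsplit]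
        rw [List.toFinset_append]
        simp only [List.toFinset_cons, List.toFinset_nil, LawfulSingleton.insert_empty_eq]
        exact Finset.union_eq_left.mpr (Finset.singleton_subset_iff.mpr
          (List.mem_toFinset.mpr hmem))
      rcases Nat.lt_or_ge 1 m with hm | hm
      · refine hmin (m-1) (by omega) (by omega) ?_
        rw [← hdl, ← h1, hcov]
      · have hm1' : m = 1 := by omega
        rw [hdl, hm1'] at hmem
        simp at hmem
    refine ⟨a :: u', ?_, fun hs => ?_⟩
    · simp only [List.length_cons, hu1, acount_of_some h]
    · rw [← List.take_append_drop m z, ← hsplit, List.append_assoc] at hs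
      rw [List.sublist_append_iff] at hs
      obtain ⟨s1, s2, hseq, hs1, hs2⟩ := hs
      cases s1 with
      | nil =>
        simp only [List.nil_append] at hseq
        rw [← hseq] at hs2
        simp only [List.singleton_append] at hs2
        exact hu2 (List.cons_sublist_cons.mp hs2)
      | cons b t =>
        have hb : b = a := by
          have := congrArg (fun l => l.head?) hseq
          simpa using this.symm
        have hbmem : b ∈ (z.take m).dropLast := hs1.subset List.mem_cons_self
        rw [hb] at hbmem
        exact hnotmem hbmem
termination_by z => z.length
decreasing_by simp only [List.length_drop]; omega

theorem isUniversal_le [Nonempty α] {z : List α} {j : ℕ} (hj : IsUniversal j z) :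
    j ≤ acount z := by
  by_contra hcon
  push_neg at hcon
  obtain ⟨u, hu1, hu2⟩ := exists_bad z
  have a0 : α := Classical.arbitrary α
  have hv := hj (u ++ List.replicate (j - (acount z + 1)) a0)
    (by simp [hu1]; omega)
  exact hu2 ((List.sublist_append_left _ _).trans hv)

theorem univIndex_eq_acount [Nonempty α] (z : List α) : univIndex z = acount z := by
  apply _root_.le_antisymm
  · exact csSup_le ⟨0, fun u hu => by rw [List.length_eq_zero_iff.mp hu]; exact List.nil_sublist z⟩
      (fun j hj => isUniversal_le hj)
  · exact le_csSup ⟨acount z, fun j hj => isUniversal_le hj⟩ (universal_acount z)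

theorem acount_sublist_mono [Nonempty α] {u z : List α} (h : u <+ z) :
    acount u ≤ acount z :=
  isUniversal_le (fun v hv => (universal_acount u v hv).trans h)

theorem rem_not_univ [Nonempty α] : ∀ z : List α, (rem z).toFinset ≠ Finset.univ := by
  intro z
  cases h : step? z with
  | none => rw [rem_of_none h]; exact step?_none_iff.mp h
  | some m =>
    obtain ⟨h1, h2, -, -⟩ := step?_some_iff.mp h
    rw [rem_of_some h]
    exact rem_not_univ (z.drop m)
termination_by z => z.length
decreasing_by simp only [List.length_drop]; omega

theorem rem_suffix : ∀ z : List α, rem z <:+ z := by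
  intro z
  cases h : step? z with
  | none => rw [rem_of_none h]
  | some m =>
    obtain ⟨h1, h2, -, -⟩ := step?_some_iff.mp h
    rw [rem_of_some h]
    exact (rem_suffix (z.drop m)).trans (List.drop_suffix m z)
termination_by z => z.length
decreasing_by simp only [List.length_drop]; omega

theorem step?_append_left {x : List α} {m : ℕ} (y : List α) (h : step? x = some m) :
    step? (x ++ y) = some m := by
  obtain ⟨h1, h2, h3, h4⟩ := step?_some_iff.mp h
  rw [step?_some_iff]
  refine ⟨h1, by rw [List.length_append]; omega, ?_, fun j hj1 hj2 => ?_⟩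
  · rw [List.take_append_of_le_length h2]; exact h3
  · rw [List.take_append_of_le_length (by omega)]; exact h4 j hj1 hj2

theorem step?_append_right {x y : List α} {m : ℕ} (h : step? (x ++ y) = some m)
    (hm : m ≤ x.length) : step? x = some m := by
  obtain ⟨h1, h2, h3, h4⟩ := step?_some_iff.mp h
  rw [step?_some_iff]
  refine ⟨h1, hm, ?_, fun j hj1 hj2 => ?_⟩
  · rw [List.take_append_of_le_length hm] at h3; exact h3
  · intro hj3
    refine h4 j hj1 hj2 ?_
    rw [List.take_append_of_le_length (show j ≤ x.length by omega)]
    exact hj3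

theorem peel_iterate_append : ∀ (x y : List α), peel^[acount x] (x ++ y) = rem x ++ y := by
  intro x y
  cases h : step? x with
  | none => rw [acount_of_none h, rem_of_none h]; rfl
  | some m =>
    obtain ⟨h1, h2, -, -⟩ := step?_some_iff.mp h
    rw [acount_of_some h, rem_of_some h]
    rw [Function.iterate_succ_apply, peel_of_some (step?_append_left y h),
      List.drop_append_of_le_length h2]
    exact peel_iterate_append (x.drop m) y
termination_by x y => x.length
decreasing_by simp only [List.length_drop]; omega

theorem acount_append : ∀ (x y : List α), acount (x ++ y) = acount x + acount (rem x ++ y) := by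
  intro x y
  cases h : step? x with
  | none => rw [acount_of_none h, rem_of_none h]; omega
  | some m =>
    obtain ⟨h1, h2, -, -⟩ := step?_some_iff.mp h
    have hloc := step?_append_left y h
    rw [acount_of_some h, rem_of_some h, acount_of_some hloc,
      List.drop_append_of_le_length h2]
    rw [acount_append (x.drop m) y]
    omega
termination_by x y => x.length
decreasing_by simp only [List.length_drop]; omega

theorem suffix_total {u v t : List α} (hu : u <:+ t) (hv : v <:+ t)
    (h : u.length ≤ v.length) : u <:+ v := by
  obtain ⟨p, rfl⟩ := hu
  obtain ⟨q, hq⟩ := hv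
  have hlen : q.length + v.length = p.length + u.length := by
    have := congrArg List.length hq
    simpa [List.length_append] using this
  have he : u = v.drop (p.length - q.length) := by
    have e2 : (q ++ v).drop (q.length + (p.length - q.length)) = v.drop (p.length - q.length) :=
      List.drop_length_add_append _
    rw [show q.length + (p.length - q.length) = p.length by omega] at e2
    rw [← e2, hq, List.drop_left]
  rw [he]
  exact List.drop_suffix _ v

theorem mono_peel [Nonempty α] {u x : List α} {mu : ℕ} (hux : u <:+ x)
    (hu : step? u = some mu) : (peel u).length ≤ (peel x).length := by
  obtain ⟨p, rfl⟩ := hux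
  obtain ⟨hmu1, hmu2, hcov, -⟩ := step?_some_iff.mp hu
  have hxcov : (p ++ u).toFinset = Finset.univ := by
    apply Finset.univ_subset_iff.mp
    rw [← hcov]
    intro a ha
    have : a ∈ u.toFinset := toFinset_take_subset mu u ha
    rw [List.toFinset_append]
    exact Finset.mem_union_right _ this
  have hx : step? (p ++ u) ≠ none := fun hn => (step?_none_iff.mp hn) hxcov
  obtain ⟨mx, hmx⟩ := Option.ne_none_iff_exists'.mp hx
  obtain ⟨hmx1, hmx2, hmxcov, hmxmin⟩ := step?_some_iff.mp hmx
  have hmxle : mx ≤ p.length + mu := by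
    by_contra hcon
    push_neg at hcon
    refine hmxmin (p.length + mu) (by omega) hcon ?_
    rw [List.take_append, Nat.add_sub_cancel_left]
    apply Finset.univ_subset_iff.mp
    rw [← hcov]
    intro a ha
    rw [List.toFinset_append]
    exact Finset.mem_union_right _ ha
  rw [peel_of_some hu, peel_of_some hmx]
  simp only [List.length_drop, List.length_append]
  omega

theorem wpow_zero (w : List α) : wpow w 0 = [] := rfl

theorem wpow_succ_front (w : List α) (M : ℕ) : wpow w (M+1) = w ++ wpow w M := by
  simp [wpow, List.replicate_succ]

theorem wpow_succ_right (w : List α) (M : ℕ) : wpow w (M+1) = wpow w M ++ w := by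
  simp [wpow, replicate_succ']

theorem w_suffix_wpow (w : List α) (M : ℕ) : w <:+ wpow w (M+1) := by
  rw [wpow_succ_right]
  exact List.suffix_append _ _

theorem front_decomp {w z : List α} {M : ℕ} (hz : z <:+ wpow w (M+1))
    (hlen : w.length ≤ z.length) : ∃ u, z = u ++ w ∧ u <:+ wpow w (M+1) := by
  have hwz : w <:+ z := suffix_total (w_suffix_wpow w M) hz hlen
  obtain ⟨u, rfl⟩ := hwz
  refine ⟨u, rfl, ?_⟩
  rw [wpow_succ_right] at hz
  obtain ⟨p, hp⟩ := hz
  rw [← List.append_assoc] at hp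
  have hpu : p ++ u = wpow w M := List.append_cancel_right hp
  have h1 : u <:+ wpow w M := ⟨p, hpu⟩
  refine h1.trans ?_
  rw [wpow_succ_front]
  exact List.suffix_append _ _

theorem rem_wpow_suffix_w [Nonempty α] {w : List α} (hwu : w.toFinset = Finset.univ) :
    ∀ s : ℕ, rem (wpow w s) <:+ w := by
  intro s
  cases s with
  | zero => exact List.nil_suffix
  | succ s =>
    have h1 : rem (wpow w (s+1)) <:+ wpow w (s+1) := rem_suffix _
    have hw : w <:+ wpow w (s+1) := w_suffix_wpow w s
    have hne : (rem (wpow w (s+1))).toFinset ≠ Finset.univ := rem_not_univ _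
    have hlen : (rem (wpow w (s+1))).length ≤ w.length := by
      by_contra hcon
      push_neg at hcon
      have h2 : w <:+ rem (wpow w (s+1)) := suffix_total hw h1 (le_of_lt hcon)
      refine hne (Finset.univ_subset_iff.mp ?_)
      rw [← hwu]
      intro a ha
      exact List.mem_toFinset.mpr (h2.sublist.subset (List.mem_toFinset.mp ha))
    exact suffix_total h1 hw hlen

theorem peel_length_le (z : List α) : (peel z).length ≤ z.length :=
  (peel_suffix z).length_le

section Core

variable [Nonempty α] {w : List α} {k : ℕ}

theorem lemA (hkc : acount w = k) (hk1 : 1 ≤ k) :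
    ∀ (M j : ℕ), j + k ≤ acount (wpow w (M+1)) →
      (peel^[j] (wpow w (M+1))).length ≤ (peel^[j+k] (wpow w (M+1))).length + w.length := by
  intro M j
  induction j with
  | zero =>
    intro _
    simp only [Nat.zero_add, Function.iterate_zero_apply]
    rw [wpow_succ_front, ← hkc, peel_iterate_append]
    simp only [List.length_append]
    omega
  | succ j ih =>
    intro hg
    have ihj := ih (by omega)
    by_cases hshort : (peel^[j+1] (wpow w (M+1))).length ≤ w.length
    · omega
    · push_neg at hshort
      have hcnt : acount (peel^[j] (wpow w (M+1))) + j = acount (wpow w (M+1)) :=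
        acount_iterate j _ (by omega)
      obtain ⟨m, hm⟩ := step?_exists (z := peel^[j] (wpow w (M+1))) (by omega)
      have hpeel : peel^[j+1] (wpow w (M+1)) = (peel^[j] (wpow w (M+1))).drop m := by
        rw [Function.iterate_succ_apply', peel_of_some hm]
      obtain ⟨hm1, hm2, -, -⟩ := step?_some_iff.mp hm
      have hlen1 : (peel^[j+1] (wpow w (M+1))).length
          = (peel^[j] (wpow w (M+1))).length - m := by
        rw [hpeel, List.length_drop]
      obtain ⟨u, hu_eq, hu_suf⟩ := front_decomp (iterate_peel_suffix j (wpow w (M+1)))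
        (by omega)
      have hulen : u.length + w.length = (peel^[j] (wpow w (M+1))).length := by
        have := congrArg List.length hu_eq
        simp only [List.length_append] at this
        omega
      have hmu : m ≤ u.length := by omega
      have hm' : step? (u ++ w) = some m := by rw [← hu_eq]; exact hm
      have hmu' : step? u = some m := step?_append_right hm' hmu
      have hpulen : (peel u).length = u.length - m := by
        rw [peel_of_some hmu', List.length_drop]
      have h2 : u.length ≤ (peel^[j+k] (wpow w (M+1))).length := by omega
      have h3 : u <:+ peel^[j+k] (wpow w (M+1)) :=
        suffix_total hu_suf (iterate_peel_suffix _ _) h2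
      have h4 : (peel u).length ≤ (peel (peel^[j+k] (wpow w (M+1)))).length :=
        mono_peel h3 hmu'
      have h5 : peel (peel^[j+k] (wpow w (M+1))) = peel^[j+1+k] (wpow w (M+1)) := by
        rw [show j+1+k = (j+k)+1 by omega, Function.iterate_succ_apply']
      rw [h5] at h4
      omega

theorem lemB (hkc : acount w = k) (hk1 : 1 ≤ k) :
    ∀ (M j : ℕ), j + k + 1 ≤ acount (wpow w (M+1)) →
      (peel^[j+k+1] (wpow w (M+1))).length + w.length ≤ (peel^[j] (wpow w (M+1))).length := by
  intro M j
  induction j with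
  | zero =>
    intro hg
    simp only [Nat.zero_add, Function.iterate_zero_apply]
    have h1 : peel^[k] (wpow w (M+1)) = rem w ++ wpow w M := by
      rw [wpow_succ_front, ← hkc, peel_iterate_append]
    have hcnt : acount (peel^[k] (wpow w (M+1))) + k = acount (wpow w (M+1)) :=
      acount_iterate k _ (by omega)
    obtain ⟨m, hm⟩ := step?_exists (z := peel^[k] (wpow w (M+1))) (by omega)
    obtain ⟨hm1, hm2, hcov, -⟩ := step?_some_iff.mp hm
    have hmgt : (rem w).length < m := by
      by_contra hle
      push_neg at hle
      have htake : (peel^[k] (wpow w (M+1))).take m = (rem w).take m := by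
        rw [h1, List.take_append_of_le_length hle]
      rw [htake] at hcov
      exact rem_not_univ w (Finset.univ_subset_iff.mp (hcov ▸ toFinset_take_subset m (rem w)))
    have hpk1 : peel^[k+1] (wpow w (M+1)) = (peel^[k] (wpow w (M+1))).drop m := by
      rw [Function.iterate_succ_apply', peel_of_some hm]
    have e1 : (peel^[k] (wpow w (M+1))).length = (rem w).length + (wpow w M).length := by
      rw [h1, List.length_append]
    have e2 : (wpow w (M+1)).length = w.length + (wpow w M).length := by
      rw [wpow_succ_front, List.length_append]
    have e3 : (peel^[k+1] (wpow w (M+1))).length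
        = (peel^[k] (wpow w (M+1))).length - m := by
      rw [hpk1, List.length_drop]
    omega
  | succ j ih =>
    intro hg
    have ihj := ih (by omega)
    have hcnt1 : acount (peel^[j+1] (wpow w (M+1))) + (j+1) = acount (wpow w (M+1)) :=
      acount_iterate (j+1) _ (by omega)
    have hbig : w.length < (peel^[j+1] (wpow w (M+1))).length := by
      by_contra hle
      push_neg at hle
      have h1 : peel^[j+1] (wpow w (M+1)) <:+ w :=
        suffix_total (iterate_peel_suffix _ _) (w_suffix_wpow w M) hle
      have h2 : acount (peel^[j+1] (wpow w (M+1))) ≤ k := by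
        rw [← hkc]
        exact acount_sublist_mono h1.sublist
      omega
    have hcnt : acount (peel^[j] (wpow w (M+1))) + j = acount (wpow w (M+1)) :=
      acount_iterate j _ (by omega)
    obtain ⟨m, hm⟩ := step?_exists (z := peel^[j] (wpow w (M+1))) (by omega)
    have hpeel : peel^[j+1] (wpow w (M+1)) = (peel^[j] (wpow w (M+1))).drop m := by
      rw [Function.iterate_succ_apply', peel_of_some hm]
    obtain ⟨hm1, hm2, -, -⟩ := step?_some_iff.mp hm
    have hlen1 : (peel^[j+1] (wpow w (M+1))).length
        = (peel^[j] (wpow w (M+1))).length - m := by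
      rw [hpeel, List.length_drop]
    obtain ⟨u, hu_eq, hu_suf⟩ := front_decomp (iterate_peel_suffix j (wpow w (M+1)))
      (by omega)
    have hulen : u.length + w.length = (peel^[j] (wpow w (M+1))).length := by
      have := congrArg List.length hu_eq
      simp only [List.length_append] at this
      omega
    have hmu : m ≤ u.length := by omega
    have hm' : step? (u ++ w) = some m := by rw [← hu_eq]; exact hm
    have hmu' : step? u = some m := step?_append_right hm' hmu
    have hpulen : (peel u).length = u.length - m := by
      rw [peel_of_some hmu', List.length_drop]
    have hlen2 : (peel^[j+k+1] (wpow w (M+1))).length ≤ u.length := by omega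
    have hsuf2 : peel^[j+k+1] (wpow w (M+1)) <:+ u :=
      suffix_total (iterate_peel_suffix _ _) hu_suf hlen2
    have hcnt2 : acount (peel^[j+k+1] (wpow w (M+1))) + (j+k+1) = acount (wpow w (M+1)) :=
      acount_iterate (j+k+1) _ (by omega)
    obtain ⟨m2, hm2'⟩ := step?_exists (z := peel^[j+k+1] (wpow w (M+1))) (by omega)
    have h4 : (peel (peel^[j+k+1] (wpow w (M+1)))).length ≤ (peel u).length :=
      mono_peel hsuf2 hm2'
    have h5 : peel (peel^[j+k+1] (wpow w (M+1))) = peel^[j+1+k+1] (wpow w (M+1)) := by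
      rw [show j+1+k+1 = (j+k+1)+1 by omega]
      exact (Function.iterate_succ_apply' _ _ _).symm
    rw [h5] at h4
    omega

end Core

end ArchAux

theorem rem_suffix_of_growth [Fintype α] [DecidableEq α] (w : List α) (k : ℕ)
    (hk : univIndex w = k) (hk1 : 1 ≤ k) (s : ℕ) :
    (univIndex (wpow w (s + 1)) = univIndex (wpow w s) + k →
        (rem (wpow w s)) <:+ (rem (wpow w (s + 1)))) ∧
      (univIndex (wpow w (s + 1)) = univIndex (wpow w s) + (k + 1) →
        (rem (wpow w (s + 1))) <:+ (rem (wpow w s))) := by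
  classical
  have hne : Nonempty α := by
    by_contra hcon
    have hS : {j | IsUniversal j w} = Set.univ := by
      ext j
      simp only [Set.mem_setOf_eq, Set.mem_univ, iff_true]
      intro u hu
      cases u with
      | nil => exact List.nil_sublist w
      | cons a _ => exact absurd ⟨a⟩ hcon
    have hb : ¬ BddAbove {j | IsUniversal j w} := by
      rw [hS]
      rintro ⟨b, hb⟩
      have := hb (Set.mem_univ (b+1))
      omega
    have h0 : univIndex w = 0 := by
      unfold univIndex
      rw [csSup_of_not_bddAbove hb, csSup_empty]
      rfl
    omega
  haveI := hne
  open ArchAux in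
  have hwk : acount w = k := by rw [← univIndex_eq_acount w]; exact hk
  open ArchAux in
  have hwu : w.toFinset = Finset.univ := by
    obtain ⟨m, hm⟩ := ArchAux.step?_exists (z := w) (by omega)
    obtain ⟨-, -, hcov, -⟩ := ArchAux.step?_some_iff.mp hm
    exact Finset.univ_subset_iff.mp (hcov ▸ ArchAux.toFinset_take_subset m w)
  have hA := ArchAux.univIndex_eq_acount (wpow w (s+1))
  have hB := ArchAux.univIndex_eq_acount (wpow w s)
  have hW2 : wpow w (s+1+1) = wpow w (s+1) ++ w := ArchAux.wpow_succ_right w (s+1)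
  have hW2' : wpow w (s+1+1) = wpow w s ++ (w ++ w) := by
    rw [hW2, ArchAux.wpow_succ_right w s, List.append_assoc]
  have hWc : ArchAux.acount (wpow w (s+1+1))
      = ArchAux.acount (wpow w (s+1)) + ArchAux.acount (rem (wpow w (s+1)) ++ w) := by
    rw [hW2]
    exact ArchAux.acount_append _ _
  have hT1 : ArchAux.peel^[ArchAux.acount (wpow w s)] (wpow w (s+1+1))
      = rem (wpow w s) ++ (w ++ w) := by
    rw [hW2']
    exact ArchAux.peel_iterate_append _ _
  have hT2 : ArchAux.peel^[ArchAux.acount (wpow w (s+1))] (wpow w (s+1+1))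
      = rem (wpow w (s+1)) ++ w := by
    rw [hW2]
    exact ArchAux.peel_iterate_append _ _
  have hr1 : rem (wpow w s) <:+ w := ArchAux.rem_wpow_suffix_w hwu s
  have hr2 : rem (wpow w (s+1)) <:+ w := ArchAux.rem_wpow_suffix_w hwu (s+1)
  constructor
  · intro h
    rw [hA, hB] at h
    have hguard : ArchAux.acount (wpow w s) + k ≤ ArchAux.acount (wpow w (s+1+1)) := by
      omega
    have hlen := ArchAux.lemA hwk hk1 (s+1) (ArchAux.acount (wpow w s)) hguard
    rw [hT1] at hlen
    rw [show ArchAux.acount (wpow w s) + k = ArchAux.acount (wpow w (s+1)) from h.symm]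
      at hlen
    rw [hT2] at hlen
    simp only [List.length_append] at hlen
    exact ArchAux.suffix_total hr1 hr2 (by omega)
  · intro h
    rw [hA, hB] at h
    have hguard : ArchAux.acount (wpow w s) + k + 1 ≤ ArchAux.acount (wpow w (s+1+1)) := by
      omega
    have hlen := ArchAux.lemB hwk hk1 (s+1) (ArchAux.acount (wpow w s)) hguard
    rw [show ArchAux.acount (wpow w s) + k + 1 = ArchAux.acount (wpow w (s+1)) from by omega]
      at hlen
    rw [hT1, hT2] at hlen
    simp only [List.length_append] at hlen
    exact ArchAux.suffix_total hr2 hr1 (by omega)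
end
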